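/- Universal lower bound on time cost (intersection-free bound, the content of inequality (4) in the proof of Theorem 2): For every permutation Π of the l sources and every 1 ≤ k ≤ |S_1 ∪ … ∪ S_l|, the average query rate satisfies v_avg(Π,k) ≤ max_{1≤i≤l} |S_i|/(ta_i + tr_i·|S_i|), and consequently the time cost of every permutation — in particular the optimal one — satisfies T(Q_k(Π)) ≥ k · min_{1≤i≤l} (ta_i + tr_i·|S_i|)/|S_i|. That is, no permutation can beat the rate achievable when all intersection tuples are ignored. -/

import Mathlib

open Finset

variable {α : Type*}

/-- The tuples retrieved from the first `p` positions of the permutation `σ`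
(position `i` queries source `σ i`). -/
def prefUnion [DecidableEq α] {l : ℕ} (S : Fin l → Finset α)
    (σ : Equiv.Perm (Fin l)) (p : ℕ) : Finset α :=
  (Finset.univ.filter (fun i : Fin l => (i : ℕ) < p)).biUnion (fun i => S (σ i))

/-- The residual count at position `i` of the permutation `σ`:
the number of tuples of the `i`-th queried source not contained in any earlier source. -/
def resid [DecidableEq α] {l : ℕ} (S : Fin l → Finset α)
    (σ : Equiv.Perm (Fin l)) (i : Fin l) : ℕ :=
  (S (σ i) \ prefUnion S σ (i : ℕ)).card

/-- The time needed to query source `i` completely: access time plus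
per-tuple transfer time times the number of tuples. -/
def srcTime {l : ℕ} (S : Fin l → Finset α) (ta tr : Fin l → ℝ) (i : Fin l) : ℝ :=
  ta i + tr i * (S i).card

/-- Cumulative residual tuple count of the first `p` positions. -/
def cumResid [DecidableEq α] {l : ℕ} (S : Fin l → Finset α)
    (σ : Equiv.Perm (Fin l)) (p : ℕ) : ℕ :=
  ∑ i ∈ Finset.univ.filter (fun i : Fin l => (i : ℕ) < p), resid S σ i

/-- Cumulative time cost of querying the first `p` positions. -/
def cumTime {l : ℕ} (S : Fin l → Finset α) (ta tr : Fin l → ℝ)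
    (σ : Equiv.Perm (Fin l)) (p : ℕ) : ℝ :=
  ∑ i ∈ Finset.univ.filter (fun i : Fin l => (i : ℕ) < p), srcTime S ta tr (σ i)

/-- `i_k`: the least prefix length whose cumulative residual count reaches `k`. -/
noncomputable def ikOf [DecidableEq α] {l : ℕ} (S : Fin l → Finset α)
    (σ : Equiv.Perm (Fin l)) (k : ℕ) : ℕ :=
  sInf {p : ℕ | k ≤ cumResid S σ p}

/-- The average query rate `v_avg(Π, k)`. -/
noncomputable def vAvg [DecidableEq α] {l : ℕ} (S : Fin l → Finset α) (ta tr : Fin l → ℝ)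
    (σ : Equiv.Perm (Fin l)) (k : ℕ) : ℝ :=
  (cumResid S σ (ikOf S σ k) : ℝ) / cumTime S ta tr σ (ikOf S σ k)

/-- The time cost `T(Q_k(Π)) = k / v_avg(Π, k)`. -/
noncomputable def timeCost [DecidableEq α] {l : ℕ} (S : Fin l → Finset α) (ta tr : Fin l → ℝ)
    (σ : Equiv.Perm (Fin l)) (k : ℕ) : ℝ :=
  (k : ℝ) / vAvg S ta tr σ k

/-- A permutation is greedy-by-query-rate if at each step `i` the chosen source
maximizes the query rate `|S \ U_{i-1}| / (ta + tr·|S|)` among all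
not-yet-chosen sources (which occupy the positions `j ≥ i`). -/
def IsGreedyRate [DecidableEq α] {l : ℕ} (S : Fin l → Finset α) (ta tr : Fin l → ℝ)
    (σ : Equiv.Perm (Fin l)) : Prop :=
  ∀ i j : Fin l, i ≤ j →
    ((S (σ j) \ prefUnion S σ (i : ℕ)).card : ℝ) / srcTime S ta tr (σ j)
      ≤ ((S (σ i) \ prefUnion S σ (i : ℕ)).card : ℝ) / srcTime S ta tr (σ i)

/-- A permutation is optimal if its time cost is minimal among all permutations. -/
def IsOptimal [DecidableEq α] {l : ℕ} (S : Fin l → Finset α) (ta tr : Fin l → ℝ)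
    (σopt : Equiv.Perm (Fin l)) (k : ℕ) : Prop :=
  ∀ σ : Equiv.Perm (Fin l), timeCost S ta tr σopt k ≤ timeCost S ta tr σ k

/-- **Universal lower bound on time cost** (inequality (4) in the proof of
Theorem 2). For every permutation `Π` and every `1 ≤ k ≤ |S_1 ∪ … ∪ S_l|`,
the average query rate never exceeds the best intersection-free rate
`max_i |S_i|/(ta_i + tr_i·|S_i|)`, and consequently
`T(Q_k(Π)) ≥ k · min_i (ta_i + tr_i·|S_i|)/|S_i|`. -/

private lemma cumResid_eq_card_prefUnion [DecidableEq α] {l : ℕ} (S : Fin l → Finset α)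
    (σ : Equiv.Perm (Fin l)) (p : ℕ) :
    cumResid S σ p = (prefUnion S σ p).card := by
  induction p with
  | zero => simp [cumResid, prefUnion]
  | succ p ih =>
    by_cases hp : p < l
    · have hset : (Finset.univ.filter (fun i : Fin l => (i : ℕ) < p + 1))
          = insert ⟨p, hp⟩ (Finset.univ.filter (fun i : Fin l => (i : ℕ) < p)) := by
        ext i
        simp [Nat.lt_succ_iff_lt_or_eq, Fin.ext_iff, or_comm]; omega
      unfold cumResid prefUnion at *
      rw [hset, Finset.biUnion_insert, Finset.sum_insert (by simp), ih,
        ← Finset.card_sdiff_add_card]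
      rfl
    · have hset : ∀ q, l ≤ q →
          (Finset.univ.filter (fun i : Fin l => (i : ℕ) < q)) = Finset.univ := by
        intro q hq; ext i; simp; omega
      unfold cumResid prefUnion at *
      rw [hset (p+1) (by omega), hset p (by omega)] at *
      exact ih

private lemma cumResid_top [DecidableEq α] {l : ℕ} (S : Fin l → Finset α)
    (σ : Equiv.Perm (Fin l)) :
    cumResid S σ l = (Finset.univ.biUnion S).card := by
  rw [cumResid_eq_card_prefUnion]
  congr 1
  unfold prefUnion
  have hset : (Finset.univ.filter (fun i : Fin l => (i : ℕ) < l)) = Finset.univ := by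
    ext i; simp [i.isLt]
  rw [hset]
  ext x
  simp only [Finset.mem_biUnion, Finset.mem_univ, true_and]
  exact ⟨fun ⟨i, hi⟩ => ⟨σ i, hi⟩, fun ⟨i, hi⟩ => ⟨σ.symm i, by simpa using hi⟩⟩

theorem timeCost_lower_bound [DecidableEq α] {l : ℕ} (hl : 0 < l)
    (S : Fin l → Finset α) (ta tr : Fin l → ℝ)
    (hS : ∀ i, (S i).Nonempty) (hta : ∀ i, 0 ≤ ta i) (htr : ∀ i, 0 < tr i)
    (k : ℕ) (hk1 : 1 ≤ k) (hk2 : k ≤ (Finset.univ.biUnion S).card)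
    (σ : Equiv.Perm (Fin l)) :
    vAvg S ta tr σ k ≤
      Finset.univ.sup' ⟨⟨0, hl⟩, Finset.mem_univ _⟩
        (fun i => ((S i).card : ℝ) / srcTime S ta tr i) ∧
    (k : ℝ) * Finset.univ.inf' ⟨⟨0, hl⟩, Finset.mem_univ _⟩
        (fun i => srcTime S ta tr i / ((S i).card : ℝ))
      ≤ timeCost S ta tr σ k := by
  have ht : ∀ i, 0 < srcTime S ta tr i := fun i => by
    have hc : (0:ℝ) < (S i).card := by exact_mod_cast (hS i).card_pos
    have := mul_pos (htr i) hc
    unfold srcTime; linarith [hta i]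
  have hc : ∀ i, (0:ℝ) < (S i).card := fun i => by exact_mod_cast (hS i).card_pos
  set p := ikOf S σ k with hp
  have hne : {q : ℕ | k ≤ cumResid S σ q}.Nonempty :=
    ⟨l, by simpa [cumResid_top] using hk2⟩
  have hkR : k ≤ cumResid S σ p := Nat.sInf_mem hne
  have hppos : 0 < p := by
    rcases Nat.eq_zero_or_pos p with h0 | h0
    · exfalso
      have : k ≤ cumResid S σ 0 := h0 ▸ hkR
      simp [cumResid] at this
      omega
    · exact h0
  have hfne : (Finset.univ.filter (fun i : Fin l => (i : ℕ) < p)).Nonempty :=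
    ⟨⟨0, hl⟩, by simp [hppos]⟩
  have hT : 0 < cumTime S ta tr σ p :=
    Finset.sum_pos (fun i _ => ht (σ i)) hfne
  have hR : (0:ℝ) < (cumResid S σ p : ℝ) := by
    have : 0 < cumResid S σ p := lt_of_lt_of_le hk1 hkR
    exact_mod_cast this
  set M := Finset.univ.sup' ⟨⟨0, hl⟩, Finset.mem_univ _⟩
      (fun i => ((S i).card : ℝ) / srcTime S ta tr i) with hM
  set m := Finset.univ.inf' ⟨⟨0, hl⟩, Finset.mem_univ _⟩
      (fun i => srcTime S ta tr i / ((S i).card : ℝ)) with hm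
  have hresid : ∀ i : Fin l, ((resid S σ i : ℝ)) ≤ ((S (σ i)).card : ℝ) := by
    intro i
    exact_mod_cast Finset.card_le_card (Finset.sdiff_subset)
  constructor
  · -- v_avg ≤ M
    rw [vAvg, div_le_iff₀ hT]
    calc (cumResid S σ p : ℝ)
        = ∑ i ∈ Finset.univ.filter (fun i : Fin l => (i : ℕ) < p),
            ((resid S σ i : ℝ)) := by rw [cumResid]; push_cast; rfl
      _ ≤ ∑ i ∈ Finset.univ.filter (fun i : Fin l => (i : ℕ) < p),
            M * srcTime S ta tr (σ i) := by
          apply Finset.sum_le_sum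
          intro i _
          have h1 : ((S (σ i)).card : ℝ) / srcTime S ta tr (σ i) ≤ M :=
            Finset.le_sup' (fun j => ((S j).card : ℝ) / srcTime S ta tr j)
              (Finset.mem_univ (σ i))
          have h2 : ((S (σ i)).card : ℝ) ≤ M * srcTime S ta tr (σ i) := by
            rw [← div_mul_cancel₀ ((S (σ i)).card : ℝ) (ne_of_gt (ht (σ i)))]
            exact mul_le_mul_of_nonneg_right h1 (le_of_lt (ht (σ i)))
          exact le_trans (hresid i) h2
      _ = M * cumTime S ta tr σ p := by rw [cumTime, Finset.mul_sum]
  · -- k * m ≤ timeCost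
    have hm0 : 0 < m := by
      rw [hm]; apply (Finset.lt_inf'_iff ..).mpr
      intro i _
      exact div_pos (ht i) (hc i)
    have hmRT : m * (cumResid S σ p : ℝ) ≤ cumTime S ta tr σ p := by
      have : m * (cumResid S σ p : ℝ)
          = ∑ i ∈ Finset.univ.filter (fun i : Fin l => (i : ℕ) < p),
              m * ((resid S σ i : ℝ)) := by
        rw [cumResid]; push_cast; rw [Finset.mul_sum]
      rw [this, cumTime]
      apply Finset.sum_le_sum
      intro i _
      have h1 : m ≤ srcTime S ta tr (σ i) / ((S (σ i)).card : ℝ) :=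
        Finset.inf'_le _ (Finset.mem_univ (σ i))
      have h2 : m * ((S (σ i)).card : ℝ) ≤ srcTime S ta tr (σ i) :=
        (le_div_iff₀ (hc (σ i))).mp h1
      have hm0' : 0 ≤ m := le_of_lt hm0
      nlinarith [hresid i, mul_le_mul_of_nonneg_left (hresid i) hm0']
    rw [timeCost, vAvg, div_div_eq_mul_div, ← hp, le_div_iff₀ hR]
    calc (k:ℝ) * m * (cumResid S σ p : ℝ)
        = (k:ℝ) * (m * (cumResid S σ p : ℝ)) := by ring
      _ ≤ (k:ℝ) * cumTime S ta tr σ p := by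
          apply mul_le_mul_of_nonneg_left hmRT (by positivity)
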